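/- Let q be a positive integer and let G = qK₃ be the disjoint union of q triangles. Then I(G;x) = (1+3x)^q, the decycling number satisfies φ(G) = q, and I(G;−1) = (−2)^{φ(G)}; hence the bound |I(G;−1)| ≤ 2^{φ(G)} is attained with equality. -/

import Mathlib

open Classical in
/-- The independence polynomial of a finite simple graph: the coefficient of `x^k`
is the number of independent sets of cardinality `k`. -/
noncomputable def indepPoly {V : Type*} [Fintype V] (G : SimpleGraph V) : Polynomial ℤ :=
  ∑ s ∈ Finset.univ.filter
      (fun s : Finset V => ∀ v ∈ s, ∀ w ∈ s, v ≠ w → ¬ G.Adj v w),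
    Polynomial.X ^ s.card

open Classical in
/-- The decycling number: minimum size of a vertex set whose removal leaves an acyclic graph. -/
noncomputable def decyclingNumber {V : Type*} [Fintype V] (G : SimpleGraph V) : ℕ :=
  sInf {n : ℕ | ∃ s : Finset V, s.card = n ∧ (G.induce {v | v ∉ s}).IsAcyclic}

/-- `qK₃`: the disjoint union of `q` triangles, realized on the vertex set `Fin q × Fin 3`,
where two vertices are adjacent iff they lie in the same copy and are distinct. -/
def qK3 (q : ℕ) : SimpleGraph (Fin q × Fin 3) where
  Adj a b := a.1 = b.1 ∧ a.2 ≠ b.2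
  symm := by constructor; intro a b ⟨h1, h2⟩; exact ⟨h1.symm, h2.symm⟩
  loopless := by constructor; intro a ⟨h1, h2⟩; exact h2 rfl

open Finset Polynomial SimpleGraph


noncomputable def sf {q : ℕ} (s : Finset (Fin q × Fin 3)) (i : Fin q) : Option (Fin 3) :=
  if h : ∃ a : Fin 3, (i, a) ∈ s then some h.choose else none

lemma sf_eq_some {q : ℕ} {s : Finset (Fin q × Fin 3)}
    (hs : ∀ v ∈ s, ∀ w ∈ s, v ≠ w → ¬ (qK3 q).Adj v w) {i : Fin q} {a : Fin 3} :
    sf s i = some a ↔ (i, a) ∈ s := by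
  unfold sf
  by_cases h : ∃ b : Fin 3, (i, b) ∈ s
  · rw [dif_pos h]
    simp only [Option.some.injEq]
    constructor
    · rintro rfl; exact h.choose_spec
    · intro ha
      by_contra hne
      exact hs _ h.choose_spec _ ha (by simp [Prod.ext_iff, hne]) ⟨rfl, hne⟩
  · rw [dif_neg h]
    constructor
    · intro heq; cases heq
    · intro hmem; exact absurd ⟨a, hmem⟩ h

lemma card_eq_card_filter {q : ℕ} {s : Finset (Fin q × Fin 3)}
    (hs : ∀ v ∈ s, ∀ w ∈ s, v ≠ w → ¬ (qK3 q).Adj v w) :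
    s.card = (Finset.univ.filter (fun i => (sf s i).isSome)).card := by
  refine Finset.card_bij (fun p _ => p.1) ?_ ?_ ?_
  · intro p hp
    simp only [mem_filter, mem_univ, true_and, Option.isSome_iff_exists]
    exact ⟨p.2, (sf_eq_some hs).mpr (by simpa using hp)⟩
  · intro p hp p' hp' h
    by_contra hne
    exact hs p hp p' hp' hne ⟨h, fun h2 => hne (Prod.ext h h2)⟩
  · intro i hi
    simp only [mem_filter, mem_univ, true_and, Option.isSome_iff_exists] at hi
    obtain ⟨a, ha⟩ := hi
    exact ⟨(i, a), (sf_eq_some hs).mp ha, rfl⟩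

lemma indepPoly_qK3 (q : ℕ) : indepPoly (qK3 q) = (1 + 3 * X) ^ q := by
  classical
  have key : indepPoly (qK3 q)
      = ∑ f : Fin q → Option (Fin 3), ∏ i : Fin q,
          (if (f i).isSome then (X : Polynomial ℤ) else 1) := by
    rw [indepPoly]
    refine Finset.sum_bij' (fun s _ => sf s)
      (fun f _ => Finset.univ.filter (fun p : Fin q × Fin 3 => f p.1 = some p.2))
      (fun s hs => Finset.mem_univ _)
      (fun f _ => ?_) (fun s hs => ?_) (fun f _ => ?_) (fun s hs => ?_)
    · -- independence of the set built from f
      simp only [mem_filter, mem_univ, true_and]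
      rintro ⟨i, a⟩ hv ⟨i', b⟩ hw hne ⟨h1, h2⟩
      simp only [mem_filter, mem_univ, true_and] at hv hw
      dsimp at h1 h2
      subst h1
      rw [hv] at hw
      exact h2 (Option.some_injective _ hw)
    · -- left inverse : set ↦ function ↦ set
      simp only [mem_filter, mem_univ, true_and] at hs
      ext ⟨i, a⟩
      simp only [mem_filter, mem_univ, true_and]
      exact sf_eq_some hs
    · -- right inverse : function ↦ set ↦ function
      have hind : ∀ v ∈ Finset.univ.filter (fun p : Fin q × Fin 3 => f p.1 = some p.2),
          ∀ w ∈ Finset.univ.filter (fun p : Fin q × Fin 3 => f p.1 = some p.2),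
          v ≠ w → ¬ (qK3 q).Adj v w := by
        rintro ⟨i, a⟩ hv ⟨i', b⟩ hw hne ⟨h1, h2⟩
        simp only [mem_filter, mem_univ, true_and] at hv hw
        dsimp at h1 h2
        subst h1
        rw [hv] at hw
        exact h2 (Option.some_injective _ hw)
      funext i
      cases hfi : f i with
      | none =>
        by_contra h
        have : ∃ a, sf (Finset.univ.filter (fun p : Fin q × Fin 3 => f p.1 = some p.2)) i
            = some a := Option.ne_none_iff_exists'.mp h
        obtain ⟨a, ha⟩ := this
        have := (sf_eq_some hind).mp ha
        simp only [mem_filter, mem_univ, true_and] at this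
        rw [hfi] at this; cases this
      | some a =>
        exact (sf_eq_some hind).mpr (by simp [hfi])
    · -- values agree
      simp only [mem_filter, mem_univ, true_and] at hs
      rw [Finset.prod_ite, Finset.prod_const, Finset.prod_const_one, mul_one,
        ← card_eq_card_filter hs]
  have hps := Finset.prod_univ_sum (fun _ : Fin q => (Finset.univ : Finset (Option (Fin 3))))
      (fun _ o => if o.isSome then (X : Polynomial ℤ) else 1)
  rw [Fintype.piFinset_univ] at hps
  have hsum : (∑ o : Option (Fin 3), if o.isSome then (X : Polynomial ℤ) else 1)
      = 1 + 3 * X := by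
    rw [Fintype.sum_option]
    simp
  rw [key, ← hps, Finset.prod_congr rfl (fun i _ => hsum), Finset.prod_const, Finset.card_fin]


-- first coordinate is constant along walks of the induced graph
lemma walk_fst_const {q : ℕ} {s : Set (Fin q × Fin 3)} {u w : s}
    (p : ((qK3 q).induce s).Walk u w) :
    ∀ x ∈ p.support, (x : Fin q × Fin 3).1 = (u : Fin q × Fin 3).1 := by
  induction p with
  | nil => intro x hx; simp at hx; subst hx; rfl
  | cons h p ih =>
    intro x hx
    rw [SimpleGraph.Walk.support_cons] at hx
    rcases List.mem_cons.mp hx with rfl | hx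
    · rfl
    · rw [ih x hx]
      exact h.1.symm

lemma decycling_qK3 (q : ℕ) (hq : 1 ≤ q) : decyclingNumber (qK3 q) = q := by
  classical
  set S := {n : ℕ | ∃ s : Finset (Fin q × Fin 3), s.card = n ∧
      ((qK3 q).induce {v | v ∉ s}).IsAcyclic} with hS
  have hqmem : q ∈ S := by
    refine ⟨Finset.univ.map ⟨fun i : Fin q => (i, (0 : Fin 3)), fun a b h => by
      simpa using congrArg Prod.fst h⟩, by simp, ?_⟩
    intro v c hc
    have h3 : 3 ≤ c.length := hc.three_le_length
    have hnodup : c.support.tail.Nodup := hc.2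
    have hlen : c.support.tail.length = c.length := by
      have := SimpleGraph.Walk.length_support c
      simp [List.length_tail, this]
    set l := c.support.tail.map (fun x => x.val.2) with hl
    have hlnodup : l.Nodup := by
      refine List.Nodup.map_on ?_ hnodup
      intro x hx y hy hxy
      have hx1 := walk_fst_const c x (List.mem_of_mem_tail hx)
      have hy1 := walk_fst_const c y (List.mem_of_mem_tail hy)
      exact Subtype.ext (Prod.ext (hx1.trans hy1.symm) hxy)
    have hsub : l.toFinset ⊆ ({1, 2} : Finset (Fin 3)) := by
      intro a ha
      rw [List.mem_toFinset, hl, List.mem_map] at ha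
      obtain ⟨x, hx, rfl⟩ := ha
      have hxs : x.val ∉ Finset.univ.map
          ⟨fun i : Fin q => (i, (0 : Fin 3)), fun a b h => by
            simpa using congrArg Prod.fst h⟩ := x.prop
      simp only [Finset.mem_map, Finset.mem_univ, true_and, Function.Embedding.coeFn_mk,
        not_exists] at hxs
      have h0 : x.val.2 ≠ 0 := by
        intro h0
        exact hxs x.val.1 (Prod.ext rfl h0.symm)
      revert h0
      generalize x.val.2 = a
      revert a
      decide
    have hcard : l.toFinset.card = l.length := List.toFinset_card_of_nodup hlnodup
    have : l.length ≤ 2 := by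
      calc l.length = l.toFinset.card := hcard.symm
        _ ≤ ({1, 2} : Finset (Fin 3)).card := Finset.card_le_card hsub
        _ = 2 := by decide
    rw [hl, List.length_map, hlen] at this
    omega
  have hinf_mem : sInf S ∈ S := Nat.sInf_mem ⟨q, hqmem⟩
  obtain ⟨s, hcard, hac⟩ := hinf_mem
  have hle : decyclingNumber (qK3 q) ≤ q := Nat.sInf_le hqmem
  have hge : q ≤ s.card := by
    by_contra hlt
    push_neg at hlt
    -- there is a copy untouched by s
    have himg : (s.image Prod.fst).card < q := lt_of_le_of_lt (Finset.card_image_le) hlt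
    have : ∃ i : Fin q, i ∉ s.image Prod.fst := by
      by_contra hall
      push_neg at hall
      have : (Finset.univ : Finset (Fin q)) ⊆ s.image Prod.fst := fun i _ => hall i
      have := Finset.card_le_card this
      simp at this
      omega
    obtain ⟨i, hi⟩ := this
    have hnot : ∀ a : Fin 3, (i, a) ∉ s := by
      intro a ha
      exact hi (Finset.mem_image.mpr ⟨(i, a), ha, rfl⟩)
    -- build a triangle cycle in the induced graph
    let u0 : ↑{v : Fin q × Fin 3 | v ∉ s} := ⟨(i, 0), hnot 0⟩
    let u1 : ↑{v : Fin q × Fin 3 | v ∉ s} := ⟨(i, 1), hnot 1⟩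
    let u2 : ↑{v : Fin q × Fin 3 | v ∉ s} := ⟨(i, 2), hnot 2⟩
    have h01 : ((qK3 q).induce {v | v ∉ s}).Adj u0 u1 := by
      show (qK3 q).Adj (i, 0) (i, 1); exact ⟨rfl, by simp⟩
    have h12 : ((qK3 q).induce {v | v ∉ s}).Adj u1 u2 := by
      show (qK3 q).Adj (i, 1) (i, 2); exact ⟨rfl, by simp⟩
    have h20 : ((qK3 q).induce {v | v ∉ s}).Adj u2 u0 := by
      show (qK3 q).Adj (i, 2) (i, 0); exact ⟨rfl, by simp⟩
    let c : ((qK3 q).induce {v | v ∉ s}).Walk u0 u0 :=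
      .cons h01 (.cons h12 (.cons h20 .nil))
    have hcyc : c.IsCycle := by
      constructor
      · constructor
        · rw [SimpleGraph.Walk.isTrail_def]
          simp [c, u0, u1, u2, Sym2.eq_iff, Subtype.ext_iff, Prod.ext_iff]
        · simp [c]
      · simp [c, u0, u1, u2, Subtype.ext_iff, Prod.ext_iff]
    exact hac c hcyc
  have hdef : decyclingNumber (qK3 q) = sInf S := rfl
  omega

open Polynomial in
/-- For `G = qK₃` (disjoint union of `q ≥ 1` triangles): `I(G;x) = (1+3x)^q`, `φ(G) = q`,
and `I(G;−1) = (−2)^{φ(G)}`; hence `|I(G;−1)| = 2^{φ(G)}`, so the bound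
`|I(G;−1)| ≤ 2^{φ(G)}` is attained with equality. -/
theorem qK3_indepPoly_decyclingNumber (q : ℕ) (hq : 1 ≤ q) :
    indepPoly (qK3 q) = (1 + 3 * X) ^ q ∧
      decyclingNumber (qK3 q) = q ∧
      (indepPoly (qK3 q)).eval (-1) = (-2) ^ decyclingNumber (qK3 q) ∧
      |(indepPoly (qK3 q)).eval (-1)| = 2 ^ decyclingNumber (qK3 q) := by
  have h1 := indepPoly_qK3 q
  have h2 := decycling_qK3 q hq
  refine ⟨h1, h2, ?_, ?_⟩
  · rw [h1, h2]; simp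
  · rw [h1, h2]; simp [abs_pow]
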